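/- arXiv:1702.07866 — 3 statements merged into one kernel-verified Lean document; each statement's English description precedes it below -/
import Mathlib

section
/- For an odd integer p ≥ 5 and colors i, j in C_p = {0, 2, 4, ..., p-3}, the dimension of the genus-one conformal block space W_{1,p,(j,i)} equals (p - 1 - max(i,j)) * (min(i,j) + 1) / 2. -/
/-- The color set `C_p = {0, 2, 4, ..., p-3}` for odd `p ≥ 5`. -/
def Cp (p : ℕ) : Finset ℕ := (Finset.range (p - 2)).filter (fun n => Even n)

/-- A triple of colors is `p`-admissible: triangle inequalities and sum bounded by `2(p-2)`. -/
def Admissible (p x y z : ℕ) : Prop :=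
  x ≤ y + z ∧ y ≤ x + z ∧ z ≤ x + y ∧ x + y + z ≤ 2 * (p - 2)

instance (p x y z : ℕ) : Decidable (Admissible p x y z) := by
  unfold Admissible; infer_instance

lemma genus_one_aux (p : ℕ) (hp : p % 2 = 1) (hp5 : 5 ≤ p)
    (i j : ℕ) (hi : i < p - 2) (hie : i % 2 = 0) (hj : j < p - 2) (hje : j % 2 = 0)
    (hij : i ≤ j) :
    (((Cp p) ×ˢ (Cp p)).filter
        (fun ab => Admissible p ab.1 ab.2 i ∧ Admissible p ab.1 ab.2 j)).card
      = (p - 1 - j) * (i + 1) / 2 := by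
  have hcard : (((Cp p) ×ˢ (Cp p)).filter
      (fun ab => Admissible p ab.1 ab.2 i ∧ Admissible p ab.1 ab.2 j)).card
      = ((Finset.range ((p - 1 - j) / 2)) ×ˢ (Finset.range (i + 1))).card := by
    apply Finset.card_bij'
      (i := fun ab _ => (((ab.1 + ab.2 - j) / 4, (ab.1 + i - ab.2) / 2) : ℕ × ℕ))
      (j := fun uv _ =>
        (((j - i) / 2 + 2 * uv.1 + uv.2 + ((j - i) / 2 + uv.2) % 2,
          (i + j) / 2 + 2 * uv.1 + ((j - i) / 2 + uv.2) % 2 - uv.2) : ℕ × ℕ))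
    · intro ab hab
      simp only [Finset.mem_filter, Finset.mem_product, Cp, Finset.mem_range,
        Nat.even_iff, Admissible] at hab ⊢
      omega
    · intro uv huv
      simp only [Finset.mem_filter, Finset.mem_product, Cp, Finset.mem_range,
        Nat.even_iff, Admissible] at huv ⊢
      omega
    · intro ab hab
      simp only [Finset.mem_filter, Finset.mem_product, Cp, Finset.mem_range,
        Nat.even_iff, Admissible] at hab
      obtain ⟨a, b⟩ := ab
      simp only [Prod.mk.injEq]
      constructor <;> omega
    · intro uv huv
      simp only [Finset.mem_filter, Finset.mem_product, Finset.mem_range] at huv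
      obtain ⟨u, v⟩ := uv
      simp only [Prod.mk.injEq]
      constructor <;> omega
  rw [hcard, Finset.card_product, Finset.card_range, Finset.card_range]
  obtain ⟨k, hk⟩ : ∃ k, p - 1 - j = 2 * k := ⟨(p - 1 - j) / 2, by omega⟩
  rw [hk, mul_assoc, Nat.mul_div_cancel_left _ (by norm_num : 0 < 2),
    Nat.mul_div_cancel_left _ (by norm_num : 0 < 2)]

/-- The dimension of the genus-one conformal block space `W_{1,p,(j,i)}`, counted as the
number of `p`-admissible colorings `(a, b)` of the two interior edges of the standard
genus-1 trivalent graph with two boundary legs colored `i` and `j`, equals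
`(p - 1 - max i j) * (min i j + 1) / 2`. -/
theorem genus_one_dimension (p : ℕ) (hp : Odd p) (hp5 : 5 ≤ p)
    (i j : ℕ) (hi : i ∈ Cp p) (hj : j ∈ Cp p) :
    (((Cp p) ×ˢ (Cp p)).filter
        (fun ab => Admissible p ab.1 ab.2 i ∧ Admissible p ab.1 ab.2 j)).card
      = (p - 1 - max i j) * (min i j + 1) / 2 := by
  have hp' : p % 2 = 1 := Nat.odd_iff.mp hp
  simp only [Cp, Finset.mem_filter, Finset.mem_range, Nat.even_iff] at hi hj
  rcases le_total i j with h | h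
  · rw [max_eq_right h, min_eq_left h]
    exact genus_one_aux p hp' hp5 i j hi.1 hi.2 hj.1 hj.2 h
  · rw [max_eq_left h, min_eq_right h]
    rw [Finset.filter_congr (fun ab _ => (and_comm : (Admissible p ab.1 ab.2 i ∧
      Admissible p ab.1 ab.2 j) ↔ _))]
    exact genus_one_aux p hp' hp5 j i hj.1 hj.2 hi.1 hi.2 h
end

section
/- For an odd integer p ≥ 5, the genus-2 Verlinde dimensions satisfy dim W_{2,p,(k)} ≥ dim W_{2,p,(0)} for all k ∈ C_p, with equality only when k = 0 or k = p-3. -/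
/-- The genus-2 Verlinde dimension formula
`dim W_{2,p,(k)} = (1/24)((k+1)p³ - (3/2)k(k+2)p² + (1/2)(k³+3k²-4)p)`. -/
noncomputable def dimW2 (p k : ℕ) : ℚ :=
  (1 / 24) * (((k : ℚ) + 1) * (p : ℚ) ^ 3
    - (3 / 2) * (k : ℚ) * ((k : ℚ) + 2) * (p : ℚ) ^ 2
    + (1 / 2) * ((k : ℚ) ^ 3 + 3 * (k : ℚ) ^ 2 - 4) * (p : ℚ))

/-- For odd `p ≥ 5` and `k ∈ C_p`, `dim W_{2,p,(k)} ≥ dim W_{2,p,(0)}`,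
with equality exactly when `k = 0` or `k = p - 3`. -/
theorem genus_two_minimal (p : ℕ) (hp : Odd p) (hp5 : 5 ≤ p) (k : ℕ) (hk : k ∈ Cp p) :
    dimW2 p 0 ≤ dimW2 p k ∧ (dimW2 p k = dimW2 p 0 ↔ k = 0 ∨ k = p - 3) := by
  simp only [Cp, Finset.mem_filter, Finset.mem_range] at hk
  obtain ⟨hklt, hke⟩ := hk
  have hkle : k ≤ p - 3 := by omega
  have hpQ : (5 : ℚ) ≤ (p : ℚ) := by exact_mod_cast hp5
  have hkQ : (k : ℚ) ≤ (p : ℚ) - 3 := by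
    have : (k : ℚ) ≤ ((p - 3 : ℕ) : ℚ) := by exact_mod_cast hkle
    rwa [Nat.cast_sub (by omega)] at this
  have key : dimW2 p k - dimW2 p 0
      = (p : ℚ) * (k : ℚ) * (2 * (p : ℚ) - (k : ℚ)) * (((p : ℚ) - 3) - (k : ℚ)) / 48 := by
    simp only [dimW2]
    push_cast
    ring
  have h1 : (0 : ℚ) ≤ (p : ℚ) := by positivity
  have h2 : (0 : ℚ) ≤ (k : ℚ) := by positivity
  have h3 : (0 : ℚ) ≤ 2 * (p : ℚ) - (k : ℚ) := by linarith
  have h4 : (0 : ℚ) ≤ ((p : ℚ) - 3) - (k : ℚ) := by linarith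
  constructor
  · nlinarith [mul_nonneg (mul_nonneg (mul_nonneg h1 h2) h3) h4]
  · constructor
    · intro heq
      rw [heq, sub_self] at key
      have hprod : (p : ℚ) * (k : ℚ) * (2 * (p : ℚ) - (k : ℚ)) * (((p : ℚ) - 3) - (k : ℚ)) = 0 := by
        linarith
      have hp0 : (p : ℚ) ≠ 0 := by linarith
      have h30 : 2 * (p : ℚ) - (k : ℚ) ≠ 0 := by linarith
      rcases mul_eq_zero.1 hprod with h | h
      · rcases mul_eq_zero.1 h with h | h
        · rcases mul_eq_zero.1 h with h | h
          · exact absurd h hp0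
          · left; exact_mod_cast h
        · exact absurd h h30
      · right
        have : (k : ℚ) = (p : ℚ) - 3 := by linarith
        have : (k : ℚ) = ((p - 3 : ℕ) : ℚ) := by rw [Nat.cast_sub (by omega)]; exact this
        exact_mod_cast this
    · rintro (rfl | rfl)
      · rfl
      · have : (((p - 3 : ℕ) : ℚ)) = (p : ℚ) - 3 := by rw [Nat.cast_sub (by omega)]; norm_num
        have h0 : (p : ℚ) * ((p - 3 : ℕ) : ℚ) * (2 * (p : ℚ) - ((p - 3 : ℕ) : ℚ)) *
            (((p : ℚ) - 3) - ((p - 3 : ℕ) : ℚ)) = 0 := by rw [this]; ring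
        rw [h0] at key
        linarith
end

section
/- If a group G has surjective homomorphisms f_i : G → H_i onto pairwise non-equivalent finite non-abelian simple groups H_1, ..., H_k (meaning for i ≠ j there is no isomorphism α : H_i → H_j with α ∘ f_i = f_j), then the product map (f_1, ..., f_k) : G → H_1 × ⋯ × H_k is surjective. -/
open Function

/-- A normal subgroup of a finite product of nonabelian simple groups which meets
every factor nontrivially is the whole group. -/
lemma pi_normal_top {k : ℕ} {H : Fin k → Type*} [∀ i, Group (H i)]
    (hsimple : ∀ i, IsSimpleGroup (H i))
    (hnonab : ∀ i, ∃ a b : H i, a * b ≠ b * a)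
    (N : Subgroup (∀ i, H i)) (hN : N.Normal)
    (h : ∀ j, ∃ n ∈ N, n j ≠ 1) : N = ⊤ := by
  have key : ∀ j (x : H j), Pi.mulSingle j x ∈ N := by
    intro j
    set S : Subgroup (H j) :=
      { carrier := {x | Pi.mulSingle j x ∈ N}
        one_mem' := by simpa using N.one_mem
        mul_mem' := by
          intro a b ha hb
          simpa [Pi.mulSingle_mul] using N.mul_mem ha hb
        inv_mem' := by
          intro a ha
          simpa [Pi.mulSingle_inv] using N.inv_mem ha } with hS
    have hSmem : ∀ x : H j, x ∈ S ↔ Pi.mulSingle j x ∈ N := fun x => Iff.rfl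
    have hSnormal : S.Normal := by
      constructor
      intro a ha g
      rw [hSmem] at ha ⊢
      have : Pi.mulSingle j (g * a * g⁻¹)
          = Pi.mulSingle j g * Pi.mulSingle j a * (Pi.mulSingle j g)⁻¹ := by
        simp [Pi.mulSingle_mul, Pi.mulSingle_inv]
      rw [this]
      exact hN.conj_mem _ ha _
    -- the center of H j is trivial
    haveI := hsimple j
    have hcenter : Subgroup.center (H j) = ⊥ := by
      rcases (Subgroup.center (H j)).normal_of_characteristic.eq_bot_or_eq_top with h' | h'
      · exact h'
      · exfalso
        obtain ⟨a, b, hab⟩ := hnonab j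
        exact hab ((Subgroup.mem_center_iff.mp (h' ▸ Subgroup.mem_top a) b)).symm
    have hSne : S ≠ ⊥ := by
      obtain ⟨n, hnN, hnj⟩ := h j
      have hnc : n j ∉ Subgroup.center (H j) := by
        rw [hcenter]; simpa using hnj
      rw [Subgroup.mem_center_iff] at hnc
      push_neg at hnc
      obtain ⟨a, hab⟩ := hnc
      set c : ∀ i, H i := Pi.mulSingle j a * n * (Pi.mulSingle j a)⁻¹ * n⁻¹ with hc
      have hcN : c ∈ N := N.mul_mem (hN.conj_mem n hnN _) (N.inv_mem hnN)
      have hcj : c j ≠ 1 := by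
        simp only [hc, Pi.mul_apply, Pi.inv_apply, Pi.mulSingle_eq_same]
        intro hcon
        exact hab (mul_inv_eq_iff_eq_mul.mp (mul_inv_eq_one.mp hcon))
      have hcsingle : c = Pi.mulSingle j (c j) := by
        funext i
        by_cases hij : i = j
        · subst hij; simp
        · simp [hc, Pi.mulSingle_eq_of_ne hij]
      have : c j ∈ S := by rw [hSmem, ← hcsingle]; exact hcN
      intro hbot
      rw [hbot, Subgroup.mem_bot] at this
      exact hcj this
    have hStop : S = ⊤ := hSnormal.eq_bot_or_eq_top.resolve_left hSne
    intro x
    rw [← hSmem]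
    rw [hStop]
    trivial
  rw [eq_top_iff]
  intro x _
  rw [← Finset.noncommProd_mulSingle x]
  exact N.noncommProd_mem _ fun i _ => key i (x i)

universe u

lemma hall_aux {G : Type*} [Group G] :
    ∀ (k : ℕ) (H : Fin k → Type u) [∀ i, Group (H i)]
      (_hsimple : ∀ i, IsSimpleGroup (H i))
      (_hnonab : ∀ i, ∃ a b : H i, a * b ≠ b * a)
      (f : ∀ i, G →* H i) (_hsurj : ∀ i, Function.Surjective (f i))
      (_hneq : ∀ i j, i ≠ j → ¬ ∃ α : H i ≃* H j, ∀ g : G, α (f i g) = f j g),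
      Function.Surjective (fun g : G => (fun i => f i g : ∀ i, H i))
  | 0, H, _, _, _, f, _, _ => fun x => ⟨1, funext fun i => i.elim0⟩
  | (k+1), H, _, hsimple, hnonab, f, hsurj, hneq => by
    set f' : ∀ i : Fin k, G →* H i.castSucc := fun i => f i.castSucc with hf'
    have ihP : Function.Surjective (fun g : G => (fun i => f' i g : ∀ i : Fin k, H i.castSucc)) :=
      hall_aux k (fun i => H i.castSucc) (fun i => hsimple _) (fun i => hnonab _) f'
        (fun i => hsurj _)
        (fun i j hij => hneq _ _ (fun h => hij (Fin.castSucc_injective _ h)))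
    set P : G →* ∀ i : Fin k, H i.castSucc := Pi.monoidHom f' with hP
    have hPapp : ∀ g (i : Fin k), P g i = f i.castSucc g := fun g i => rfl
    have hPsurj : Function.Surjective P := ihP
    set N : Subgroup (∀ i : Fin k, H i.castSucc) :=
      (MonoidHom.ker (f (Fin.last k))).map P with hN
    have hNnormal : N.Normal := Subgroup.Normal.map inferInstance P hPsurj
    by_cases hNtop : N = ⊤
    · -- the key case: ker (f last) surjects onto the product of the first k factors
      intro x
      obtain ⟨g₁, hg₁⟩ := hsurj (Fin.last k) (x (Fin.last k))
      have : (fun i : Fin k => x i.castSucc * (f i.castSucc g₁)⁻¹) ∈ N := by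
        rw [hNtop]; trivial
      obtain ⟨g₂, hg₂ker, hg₂⟩ := this
      refine ⟨g₂ * g₁, funext fun i => ?_⟩
      induction i using Fin.lastCases with
      | last =>
        simp only [map_mul]
        rw [MonoidHom.mem_ker.mp hg₂ker, hg₁, one_mul]
      | cast j =>
        simp only [map_mul]
        have := congrFun hg₂ j
        rw [hPapp] at this
        rw [this, inv_mul_cancel_right]
    · -- otherwise some factor j gets trivial image from ker (f last), contradiction
      exfalso
      have : ¬ ∀ j, ∃ n ∈ N, n j ≠ 1 := fun h =>
        hNtop (pi_normal_top (fun i => hsimple _) (fun i => hnonab _) N hNnormal h)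
      push_neg at this
      obtain ⟨j, hj⟩ := this
      have hker : MonoidHom.ker (f (Fin.last k)) ≤ MonoidHom.ker (f j.castSucc) := by
        intro g hg
        have : P g ∈ N := ⟨g, hg, rfl⟩
        exact MonoidHom.mem_ker.mpr (hj _ this)
      set e := QuotientGroup.quotientKerEquivOfSurjective _ (hsurj (Fin.last k)) with he
      set β : H (Fin.last k) →* H j.castSucc :=
        (QuotientGroup.lift _ (f j.castSucc) hker).comp e.symm.toMonoidHom with hβdef
      have hβ : ∀ g : G, β (f (Fin.last k) g) = f j.castSucc g := by
        intro g
        have h1 : e.symm (f (Fin.last k) g) = QuotientGroup.mk g := by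
          rw [MulEquiv.symm_apply_eq]; rfl
        simp only [hβdef, MonoidHom.comp_apply, MulEquiv.coe_toMonoidHom, h1]
        rfl
      have hβsurj : Function.Surjective β := by
        intro y
        obtain ⟨g, hg⟩ := hsurj j.castSucc y
        exact ⟨f (Fin.last k) g, by rw [hβ, hg]⟩
      haveI : Nontrivial (H j.castSucc) := by
        obtain ⟨a, b, hab⟩ := hnonab j.castSucc
        exact ⟨a * b, b * a, hab⟩
      have hβinj : Function.Injective β := by
        haveI := hsimple (Fin.last k)
        rw [← MonoidHom.ker_eq_bot_iff]
        rcases (MonoidHom.normal_ker β).eq_bot_or_eq_top with h | h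
        · exact h
        · exfalso
          obtain ⟨y, hy⟩ := exists_ne (1 : H j.castSucc)
          obtain ⟨z, hz⟩ := hβsurj y
          have : z ∈ MonoidHom.ker β := h ▸ Subgroup.mem_top z
          rw [MonoidHom.mem_ker] at this
          exact hy (by rw [← hz, this])
      exact hneq (Fin.last k) j.castSucc (Fin.castSucc_lt_last j).ne'
        ⟨MulEquiv.ofBijective β ⟨hβinj, hβsurj⟩, hβ⟩

/-- Dunfield–Thurston / Hall lemma: if `G` surjects onto pairwise non-equivalent finite
non-abelian simple groups `H 1, ..., H k`, then the product map is surjective. -/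
theorem hall_lemma_finite {G : Type*} [Group G] (k : ℕ) (H : Fin k → Type*)
    [∀ i, Group (H i)] [∀ i, Finite (H i)]
    (hsimple : ∀ i, IsSimpleGroup (H i))
    (hnonab : ∀ i, ∃ a b : H i, a * b ≠ b * a)
    (f : ∀ i, G →* H i) (hsurj : ∀ i, Function.Surjective (f i))
    (hneq : ∀ i j, i ≠ j → ¬ ∃ α : H i ≃* H j, ∀ g : G, α (f i g) = f j g) :
    Function.Surjective (fun g : G => (fun i => f i g : ∀ i, H i)) :=
  hall_aux k H hsimple hnonab f hsurj hneq
end
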